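/- Let B ⊆ [m]×[n] be a board and q a prime power. Then (q−1)^{m+n−C(G(B))} divides #S_d(B,q), where C(G(B)) is the number of connected components of the bipartite graph G(B). -/
import Mathlib


/-- `sCount B F d` is the number of matrices over `F` of rank `d`
whose support is exactly `B`. -/
noncomputable def sCount {m n : ℕ} (B : Finset (Fin m × Fin n))
    (F : Type) [Field F] [Fintype F] (d : ℕ) : ℕ :=
  Nat.card {A : Matrix (Fin m) (Fin n) F // A.rank = d ∧ ∀ i j, A i j ≠ 0 ↔ (i, j) ∈ B}

/-- The bipartite graph of a board: vertices are `[m] ⊔ [n]`, with an edge between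
row vertex `i` and column vertex `j` for each cell `(i,j) ∈ B`. -/
def boardGraph {m n : ℕ} (B : Finset (Fin m × Fin n)) : SimpleGraph (Fin m ⊕ Fin n) :=
  SimpleGraph.fromRel (fun u v => ∃ i j, (i, j) ∈ B ∧ u = Sum.inl i ∧ v = Sum.inr j)

section Aux

open Matrix MulAction SimpleGraph

variable {m n : ℕ} (B : Finset (Fin m × Fin n)) (d : ℕ)
  (F : Type) [Field F] [Fintype F]

/-- The matrices counted by `sCount`. -/
private abbrev SB := {A : Matrix (Fin m) (Fin n) F // A.rank = d ∧ ∀ i j, A i j ≠ 0 ↔ (i, j) ∈ B}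

/-- The torus acting on matrices. -/
private abbrev Torus (m n : ℕ) (F : Type) [Field F] := (Fin m → Fˣ) × (Fin n → Fˣ)

private lemma rank_scale (s : Fin m → Fˣ) (t : Fin n → Fˣ) (A : Matrix (Fin m) (Fin n) F) :
    (Matrix.of fun i j => (s i : F) * A i j * (t j : F)).rank = A.rank := by
  have h : (Matrix.of fun i j => (s i : F) * A i j * (t j : F))
      = Matrix.diagonal (fun i => (s i : F)) * A * Matrix.diagonal (fun j => (t j : F)) := by
    ext i j
    simp [Matrix.mul_diagonal, Matrix.diagonal_mul, mul_assoc]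
  have hs : IsUnit (Matrix.diagonal (fun i => (s i : F))).det := by
    rw [Matrix.det_diagonal]
    exact Finset.prod_induction _ IsUnit (fun a b => IsUnit.mul) isUnit_one
      (fun i _ => (s i).isUnit)
  have ht : IsUnit (Matrix.diagonal (fun j => (t j : F))).det := by
    rw [Matrix.det_diagonal]
    exact Finset.prod_induction _ IsUnit (fun a b => IsUnit.mul) isUnit_one
      (fun j _ => (t j).isUnit)
  rw [h, Matrix.rank_mul_eq_left_of_isUnit_det _ _ ht,
    Matrix.rank_mul_eq_right_of_isUnit_det _ _ hs]

private def torusSMul (g : Torus m n F) (A : SB B d F) : SB B d F :=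
  ⟨Matrix.of fun i j => (g.1 i : F) * A.1 i j * (g.2 j : F),
    by rw [rank_scale]; exact A.2.1,
    fun i j => by
      rw [← A.2.2 i j]
      simp [mul_ne_zero_iff, Units.ne_zero]⟩

private instance torusAction : MulAction (Torus m n F) (SB B d F) where
  smul := torusSMul B d F
  one_smul A := Subtype.ext (by ext i j; show (1 : Fˣ) * A.1 i j * (1 : Fˣ) = A.1 i j; simp)
  mul_smul g h A := Subtype.ext (by
    ext i j
    show ((g.1 i * h.1 i : Fˣ) : F) * A.1 i j * ((g.2 j * h.2 j : Fˣ) : F)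
        = (g.1 i : F) * ((h.1 i : F) * A.1 i j * (h.2 j : F)) * (g.2 j : F)
    push_cast
    ring)

private lemma smul_def (g : Torus m n F) (A : SB B d F) (i : Fin m) (j : Fin n) :
    (g • A).1 i j = (g.1 i : F) * A.1 i j * (g.2 j : F) := rfl

/-- The common stabilizer subgroup. -/
private def torusStab : Subgroup (Torus m n F) where
  carrier := {g | ∀ i j, (i, j) ∈ B → g.1 i * g.2 j = 1}
  one_mem' := by intro i j _; simp
  mul_mem' := by
    intro g h hg hh i j hij
    show (g.1 i * h.1 i) * (g.2 j * h.2 j) = 1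
    have := hg i j hij
    have := hh i j hij
    rw [mul_mul_mul_comm, hg i j hij, hh i j hij, one_mul]
  inv_mem' := by
    intro g hg i j hij
    show (g.1 i)⁻¹ * (g.2 j)⁻¹ = 1
    rw [← _root_.mul_inv_rev, mul_comm, hg i j hij, inv_one]

private lemma stabilizer_eq (x : SB B d F) :
    MulAction.stabilizer (Torus m n F) x = torusStab B F := by
  ext g
  rw [MulAction.mem_stabilizer_iff]
  constructor
  · intro hg i j hij
    have hx : (g.1 i : F) * x.1 i j * (g.2 j : F) = x.1 i j := by
      conv_rhs => rw [← hg]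
      exact (smul_def B d F g x i j).symm
    have hne : x.1 i j ≠ 0 := (x.2.2 i j).mpr hij
    have h2 : ((g.1 i * g.2 j : Fˣ) : F) * x.1 i j = 1 * x.1 i j := by
      push_cast
      rw [one_mul]
      calc (g.1 i : F) * (g.2 j : F) * x.1 i j
          = (g.1 i : F) * x.1 i j * (g.2 j : F) := by ring
        _ = x.1 i j := hx
    exact Units.ext (by simpa using mul_right_cancel₀ hne h2)
  · intro hg
    apply Subtype.ext
    ext i j
    rw [smul_def]
    by_cases hij : (i, j) ∈ B
    · have h1 : ((g.1 i * g.2 j : Fˣ) : F) = 1 := by rw [hg i j hij]; simp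
      push_cast at h1
      calc (g.1 i : F) * x.1 i j * (g.2 j : F)
          = ((g.1 i : F) * (g.2 j : F)) * x.1 i j := by ring
        _ = x.1 i j := by rw [h1, one_mul]
    · have : x.1 i j = 0 := by
        by_contra h
        exact hij ((x.2.2 i j).mp h)
      rw [this, mul_zero, zero_mul]

private lemma adj_const (g : torusStab B F) (u v : Fin m ⊕ Fin n)
    (h : (boardGraph B).Adj u v) :
    Sum.elim g.1.1 (fun j => (g.1.2 j)⁻¹) u = Sum.elim g.1.1 (fun j => (g.1.2 j)⁻¹) v := by
  rw [boardGraph, SimpleGraph.fromRel_adj] at h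
  rcases h.2 with ⟨i, j, hij, rfl, rfl⟩ | ⟨i, j, hij, rfl, rfl⟩
  · simpa using eq_inv_of_mul_eq_one_left (g.2 i j hij)
  · simpa using (eq_inv_of_mul_eq_one_left (g.2 i j hij)).symm

private lemma walk_const (g : torusStab B F) (u v : Fin m ⊕ Fin n)
    (p : (boardGraph B).Walk u v) :
    Sum.elim g.1.1 (fun j => (g.1.2 j)⁻¹) u = Sum.elim g.1.1 (fun j => (g.1.2 j)⁻¹) v := by
  induction p with
  | nil => rfl
  | cons h _ ih => exact (adj_const B F g _ _ h).trans ih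

/-- The stabilizer is equivalent to functions from connected components to `Fˣ`. -/
private noncomputable def stabEquiv :
    torusStab B F ≃ ((boardGraph B).ConnectedComponent → Fˣ) where
  toFun g := SimpleGraph.ConnectedComponent.lift (Sum.elim g.1.1 fun j => (g.1.2 j)⁻¹)
    (fun u v p _ => walk_const B F g u v p)
  invFun f := ⟨(fun i => f ((boardGraph B).connectedComponentMk (Sum.inl i)),
      fun j => (f ((boardGraph B).connectedComponentMk (Sum.inr j)))⁻¹),
    fun i j hij => by
      have hadj : (boardGraph B).Adj (Sum.inl i) (Sum.inr j) := by
        rw [boardGraph, SimpleGraph.fromRel_adj]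
        exact ⟨by simp, Or.inl ⟨i, j, hij, rfl, rfl⟩⟩
      show f ((boardGraph B).connectedComponentMk (Sum.inl i)) *
          (f ((boardGraph B).connectedComponentMk (Sum.inr j)))⁻¹ = 1
      rw [SimpleGraph.ConnectedComponent.connectedComponentMk_eq_of_adj hadj]
      exact mul_inv_cancel _⟩
  left_inv g := by
    apply Subtype.ext
    apply Prod.ext
    · funext i; rfl
    · funext j
      show ((Sum.elim g.1.1 (fun j => (g.1.2 j)⁻¹)) (Sum.inr j))⁻¹ = g.1.2 j
      simp
  right_inv f := by
    funext c
    induction c using SimpleGraph.ConnectedComponent.ind with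
    | _ v =>
      cases v with
      | inl i => rfl
      | inr j =>
        show ((f ((boardGraph B).connectedComponentMk (Sum.inr j)))⁻¹)⁻¹ = _
        simp

private lemma card_stab :
    Nat.card (torusStab B F) =
      (Fintype.card F - 1) ^ Nat.card (boardGraph B).ConnectedComponent := by
  classical
  rw [Nat.card_congr (stabEquiv B F), Nat.card_fun]
  congr 1
  rw [Nat.card_eq_fintype_card, Fintype.card_units]

end Aux

/-- `(q−1)^{m+n−C(G(B))}` divides `#S_d(B,q)`. -/
theorem orbit_size_divides_sCount {m n : ℕ} (B : Finset (Fin m × Fin n)) (d : ℕ)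
    (F : Type) [Field F] [Fintype F] :
    (Fintype.card F - 1) ^ (m + n - Nat.card (boardGraph B).ConnectedComponent) ∣
      sCount B F d := by
  classical
  set u := Fintype.card F - 1 with hu
  set C := Nat.card (boardGraph B).ConnectedComponent with hC
  have hupos : 0 < u := by
    rw [hu, ← Fintype.card_units (α := F)]
    exact Fintype.card_pos
  -- C ≤ m + n
  have hCle : C ≤ m + n := by
    have h1 := Nat.card_le_card_of_surjective
      ((boardGraph B).connectedComponentMk) (SimpleGraph.ConnectedComponent.ind (fun v => ⟨v, rfl⟩))
    have h2 : Nat.card (Fin m ⊕ Fin n) = m + n := by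
      simp [Nat.card_sum, Nat.card_eq_fintype_card]
    rw [hC]
    rw [h2] at h1
    exact h1
  -- cardinality of the torus
  have hT : Nat.card (Torus m n F) = u ^ (m + n) := by
    rw [Nat.card_prod, Nat.card_fun, Nat.card_fun, Nat.card_eq_fintype_card (α := Fˣ),
      Fintype.card_units, Nat.card_eq_fintype_card (α := Fin m),
      Nat.card_eq_fintype_card (α := Fin n), Fintype.card_fin, Fintype.card_fin, ← pow_add]
  -- Lagrange
  have hLag := Subgroup.card_eq_card_quotient_mul_card_subgroup (torusStab B F (m := m) (n := n))
  rw [hT, card_stab] at hLag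
  -- card of the quotient
  have hquot : Nat.card (Torus m n F ⧸ torusStab B F) = u ^ (m + n - C) := by
    have hpow : u ^ (m + n) = u ^ (m + n - C) * u ^ C := by
      rw [← pow_add, Nat.sub_add_cancel hCle]
    rw [hpow] at hLag
    exact Nat.eq_of_mul_eq_mul_right (pow_pos hupos C) hLag.symm
  -- orbit decomposition
  rw [← hquot]
  unfold sCount
  have e : SB B d F ≃
      (MulAction.orbitRel.Quotient (Torus m n F) (SB B d F)) × (Torus m n F ⧸ torusStab B F) := by
    refine (MulAction.selfEquivSigmaOrbitsQuotientStabilizer (Torus m n F) (SB B d F)).trans ?_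
    refine (Equiv.sigmaCongrRight (fun ω => ?_)).trans (Equiv.sigmaEquivProd _ _)
    exact Equiv.cast (congrArg (fun H => Torus m n F ⧸ H) (stabilizer_eq B d F ω.out))
  rw [show Nat.card (SB B d F) =
      Nat.card ((MulAction.orbitRel.Quotient (Torus m n F) (SB B d F))
        × (Torus m n F ⧸ torusStab B F)) from Nat.card_congr e, Nat.card_prod]
  exact Dvd.intro_left _ rfl
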